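/- The expected loss L(x; G, α, β, δ, γ, T) = ∫₀^T Σ_i w_i C_i(t) dt, viewed as a function of the attack strategy x ∈ ℝ₊^N, is monotone: if 0 ≤ x ≤ y componentwise, then L(x) ≤ L(y). -/

import Mathlib

open Set Filter Real Topology

lemma frequently_slope_sup_lt {ι : Type*} [Fintype ι] [Nonempty ι]
    (g d : ι → ℝ → ℝ) (t : ℝ) (hg : ∀ i, HasDerivAt (g i) (d i t) t)
    (r : ℝ)
    (hr : ∀ i, g i t = (Finset.univ.sup' Finset.univ_nonempty fun j => g j t) → d i t < r) :
    ∀ᶠ z in 𝓝[>] t,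
      slope (fun s => Finset.univ.sup' Finset.univ_nonempty fun j => g j s) t z < r := by
  set f : ℝ → ℝ := fun s => Finset.univ.sup' Finset.univ_nonempty fun j => g j s with hf
  have hcomp : ∀ i, ∀ᶠ z in 𝓝[>] t, g i z < f t + r * (z - t) := by
    intro i
    rcases eq_or_lt_of_le (Finset.le_sup' (fun j => g j t) (Finset.mem_univ i)) with h | h
    · -- maximizer
      have hd : d i t < r := hr i h
      have hslope : ∀ᶠ z in 𝓝[≠] t, slope (g i) t z < r :=
        (hasDerivAt_iff_tendsto_slope.1 (hg i)).eventually_lt_const hd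
      have hslope' : ∀ᶠ z in 𝓝[>] t, slope (g i) t z < r :=
        hslope.filter_mono (nhdsWithin_mono t fun z hz => ne_of_gt hz)
      filter_upwards [hslope', self_mem_nhdsWithin] with z hz hzt
      rw [slope_def_field, div_lt_iff₀ (sub_pos.2 hzt)] at hz
      linarith [h]
    · -- not a maximizer
      have hc : ContinuousAt (g i) t := (hg i).continuousAt
      have hcont : ContinuousAt (fun z => f t + r * (z - t) - g i z) t := by
        fun_prop
      have hpos : (0:ℝ) < f t + r * (t - t) - g i t := by
        simp only [sub_self, mul_zero, add_zero]; linarith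
      have hev : ∀ᶠ z in 𝓝 t, 0 < f t + r * (z - t) - g i z :=
        hcont.tendsto.eventually_const_lt hpos
      have : ∀ᶠ z in 𝓝 t, g i z < f t + r * (z - t) := by
        filter_upwards [hev] with z hz; linarith
      exact this.filter_mono nhdsWithin_le_nhds
  have hall : ∀ᶠ z in 𝓝[>] t, (∀ i, g i z < f t + r * (z - t)) ∧ t < z := by
    refine ((eventually_all.2 hcomp).and self_mem_nhdsWithin).mono ?_
    exact fun z hz => ⟨hz.1, hz.2⟩
  filter_upwards [hall] with z hz
  have hfz : f z < f t + r * (z - t) := by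
    rw [hf]
    exact (Finset.sup'_lt_iff Finset.univ_nonempty).2 fun i _ => hz.1 i
  rw [slope_def_field, div_lt_iff₀ (sub_pos.2 hz.2)]
  linarith

lemma sup_comparison {ι : Type*} [Fintype ι] [Nonempty ι] {a b : ℝ}
    (g d : ι → ℝ → ℝ) (hg : ∀ i, ∀ t ∈ Icc a b, HasDerivAt (g i) (d i t) t)
    (B B' : ℝ → ℝ) (hB : ∀ t, HasDerivAt B (B' t) t)
    (hinit : ∀ i, g i a ≤ B a)
    (hcontact : ∀ t ∈ Ico a b, (∀ j, g j t ≤ B t) → ∀ i, g i t = B t → d i t < B' t) :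
    ∀ t ∈ Icc a b, ∀ i, g i t ≤ B t := by
  set f : ℝ → ℝ := fun s => Finset.univ.sup' Finset.univ_nonempty fun j => g j s with hfdef
  set f' : ℝ → ℝ := fun s => sSup ((fun i => d i s) '' {i | g i s = f s}) with hf'def
  have hfin : ∀ s, ((fun i => d i s) '' {i | g i s = f s}).Finite := fun s =>
    (Set.toFinite _).image _
  have hne : ∀ s, ((fun i => d i s) '' {i | g i s = f s}).Nonempty := by
    intro s
    obtain ⟨i, _, hi⟩ := Finset.exists_mem_eq_sup' (Finset.univ_nonempty (α := ι))
      (fun j => g j s)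
    exact ⟨d i s, ⟨i, hi.symm, rfl⟩⟩
  have key : ∀ t ∈ Icc a b, f t ≤ B t := by
    intro t ht
    refine image_le_of_liminf_slope_right_lt_deriv_boundary (f' := f')
      (fun s hs => (ContinuousAt.finset_sup'_apply Finset.univ_nonempty
        fun i _ => (hg i s hs).continuousAt).continuousWithinAt)
      ?_ ?_ hB ?_ ht
    · intro s hs r hr
      refine (frequently_slope_sup_lt g d s (fun i => hg i s (Ico_subset_Icc_self hs)) r
        ?_).frequently
      intro i hi
      exact lt_of_le_of_lt (le_csSup (hfin s).bddAbove ⟨i, hi, rfl⟩) hr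
    · exact (Finset.sup'_le _ _ fun i _ => hinit i)
    · intro s hs hfB
      rw [hf'def]
      refine ((hfin s).csSup_lt_iff (hne s)).2 ?_
      rintro v ⟨i, hi, rfl⟩
      exact hcontact s hs (fun j => (Finset.le_sup' (fun j => g j s) (Finset.mem_univ j)).trans
        (hfB ▸ le_rfl)) i (hi.trans hfB)
  intro t ht i
  exact (Finset.le_sup' (fun j => g j t) (Finset.mem_univ i)).trans (key t ht)

lemma eps_limit {u c K T t : ℝ} (hK : 0 < K) (ht : t ≤ T)
    (h : ∀ ε, 0 < ε → ε * Real.exp (K * T) ≤ 1 → u ≤ c + ε * Real.exp (K * t)) : u ≤ c := by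
  by_contra hlt
  push_neg at hlt
  set e := Real.exp (K * T) with he
  have hepos : 0 < e := Real.exp_pos _
  set ε := min (1 / e) ((u - c) / (2 * e)) with hε
  have hεpos : 0 < ε := lt_min (by positivity) (div_pos (by linarith) (by positivity))
  have h1 : ε * e ≤ 1 := by
    calc ε * e ≤ (1 / e) * e := by
          exact mul_le_mul_of_nonneg_right (min_le_left _ _) hepos.le
    _ = 1 := by field_simp
  have h2 : ε * e ≤ (u - c) / 2 := by
    calc ε * e ≤ ((u - c) / (2 * e)) * e :=
          mul_le_mul_of_nonneg_right (min_le_right _ _) hepos.le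
    _ = (u - c) / 2 := by field_simp
  have hexp : Real.exp (K * t) ≤ e := Real.exp_le_exp.2 (by nlinarith)
  have := h ε hεpos h1
  nlinarith [mul_le_mul_of_nonneg_left hexp hεpos.le]

/-- The right-hand side of the SCS model. -/
noncomputable def scsF {N : ℕ} (a : Fin N → Fin N → ℝ) (w x : Fin N → ℝ) (α β δ γ : ℝ)
    (C : Fin N → ℝ) : Fin N → ℝ :=
  fun i => (1 / (δ * w i)) * (α * x i + β * ∑ j, a j i * C j) * (1 - C i) - γ * w i * C i

lemma scs_box_invariant {N : ℕ} [Nonempty (Fin N)] (a : Fin N → Fin N → ℝ)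
    (ha : ∀ i j, a i j = 0 ∨ a i j = 1)
    (w s : Fin N → ℝ) (α β δ γ T : ℝ)
    (hα : 0 < α) (hβ : 0 < β) (hδ : 0 < δ) (hγ : 0 < γ)
    (hs : ∀ i, 0 ≤ s i) (hw : ∀ i, 0 < w i) (hT : 0 < T)
    (C : ℝ → Fin N → ℝ)
    (hC : ∀ t ∈ Icc (0:ℝ) T, HasDerivAt C (scsF a w s α β δ γ (C t)) t)
    (h0 : ∀ i, C 0 i ∈ Icc (0:ℝ) 1) (K : ℝ)
    (hK1 : 1 ≤ K) (hKi : ∀ i, 2 * β * N / (δ * w i) < K) :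
    ∀ t ∈ Icc (0:ℝ) T, ∀ i, C t i ∈ Icc (0:ℝ) 1 := by
  have hK0 : (0:ℝ) < K := lt_of_lt_of_le one_pos hK1
  have hcomp : ∀ i, ∀ t ∈ Icc (0:ℝ) T,
      HasDerivAt (fun t => C t i) (scsF a w s α β δ γ (C t) i) t :=
    fun i t ht => hasDerivAt_pi.1 (hC t ht) i
  have main : ∀ ε, 0 < ε → ε * Real.exp (K * T) ≤ 1 → ∀ t ∈ Icc (0:ℝ) T, ∀ i,
      -(C t i) ≤ ε * Real.exp (K * t) ∧ C t i - 1 ≤ ε * Real.exp (K * t) := by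
    intro ε hε hεT
    have hB : ∀ t, HasDerivAt (fun t => ε * Real.exp (K * t))
        (K * (ε * Real.exp (K * t))) t := by
      intro t
      have h1 : HasDerivAt (fun t : ℝ => K * t) K t := by
        simpa using (hasDerivAt_id t).const_mul K
      have := h1.exp.const_mul ε
      rw [show K * (ε * Real.exp (K * t)) = ε * (Real.exp (K * t) * K) by ring]; exact this
    have key := sup_comparison (ι := Fin N ⊕ Fin N) (a := (0:ℝ)) (b := T)
      (g := fun p t => Sum.elim (fun i => -(C t i)) (fun i => C t i - 1) p)
      (d := fun p t => Sum.elim (fun i => -(scsF a w s α β δ γ (C t) i))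
        (fun i => scsF a w s α β δ γ (C t) i) p)
      (fun p => by
        rcases p with i | i
        · exact fun t ht => (hcomp i t ht).neg
        · exact fun t ht => (hcomp i t ht).sub_const 1)
      (fun t => ε * Real.exp (K * t)) (fun t => K * (ε * Real.exp (K * t))) hB
      (fun p => by
        rcases p with i | i <;> simp only [Sum.elim_inl, Sum.elim_inr] <;>
          rw [mul_zero, Real.exp_zero, mul_one]
        · linarith [(h0 i).1, hε]
        · linarith [(h0 i).2, hε])
      ?_
    · intro t ht i
      exact ⟨key t ht (Sum.inl i), key t ht (Sum.inr i)⟩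
    -- contact condition
    intro t ht hall i hi
    set E := ε * Real.exp (K * t) with hEdef
    have hE : 0 < E := by positivity
    have hE1 : E ≤ 1 := by
      have : Real.exp (K * t) ≤ Real.exp (K * T) :=
        Real.exp_le_exp.2 (mul_le_mul_of_nonneg_left ht.2.le hK0.le)
      nlinarith
    have hlow : ∀ j, -E ≤ C t j := fun j => by
      have := hall (Sum.inl j); simp only [Sum.elim_inl] at this; linarith
    have hup : ∀ j, C t j ≤ 1 + E := fun j => by
      have := hall (Sum.inr j); simp only [Sum.elim_inr] at this; linarith
    have hsum : ∀ i, -((N:ℝ) * E) ≤ ∑ j, a j i * C t j := by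
      intro i
      calc -((N:ℝ) * E) = ∑ _j : Fin N, -E := by
            rw [Finset.sum_const, Finset.card_univ, Fintype.card_fin, nsmul_eq_mul]; ring
      _ ≤ ∑ j, a j i * C t j := by
            refine Finset.sum_le_sum fun j _ => ?_
            rcases ha j i with h | h
            · rw [h, zero_mul]; linarith
            · rw [h, one_mul]; exact hlow j
    rcases i with i | i <;> simp only [Sum.elim_inl, Sum.elim_inr] at hi ⊢
    · -- lower contact: C t i = -E
      have hCi : C t i = -E := by linarith
      have hD : 0 < 1 / (δ * w i) := one_div_pos.2 (mul_pos hδ (hw i))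
      set D := 1 / (δ * w i) with hDdef
      have hKD : 2 * β * (N:ℝ) * D < K := by
        rw [hDdef, ← div_eq_mul_one_div]; exact hKi i
      set S := ∑ j, a j i * C t j with hSdef
      have hP : -(β * (N:ℝ) * E) ≤ α * s i + β * S := by
        have h1 : 0 ≤ α * s i := mul_nonneg hα.le (hs i)
        have h2 : β * (-((N:ℝ) * E)) ≤ β * S := mul_le_mul_of_nonneg_left (hsum i) hβ.le
        nlinarith
      show -(D * (α * s i + β * S) * (1 - C t i) - γ * w i * C t i) < K * E
      rw [hCi]
      have h1 : 0 ≤ D * (1 + E) * (β * (N:ℝ) * E + (α * s i + β * S)) :=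
        mul_nonneg (mul_nonneg hD.le (by linarith)) (by linarith)
      have h2 : 0 ≤ β * (N:ℝ) * D * E * (1 - E) := by
        exact mul_nonneg (mul_nonneg (mul_nonneg (mul_nonneg hβ.le (Nat.cast_nonneg N)) hD.le) hE.le) (by linarith)
      have h3 : 0 < E * (K - 2 * β * (N:ℝ) * D) := mul_pos hE (by linarith)
      have h4 : 0 < γ * w i * E := mul_pos (mul_pos hγ (hw i)) hE
      nlinarith [h1, h2, h3, h4]
    · -- upper contact: C t i = 1 + E
      have hCi : C t i = 1 + E := by linarith
      have hD : 0 < 1 / (δ * w i) := one_div_pos.2 (mul_pos hδ (hw i))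
      set D := 1 / (δ * w i) with hDdef
      have hKD : 2 * β * (N:ℝ) * D < K := by
        rw [hDdef, ← div_eq_mul_one_div]; exact hKi i
      set S := ∑ j, a j i * C t j with hSdef
      have hP : -(β * (N:ℝ) * E) ≤ α * s i + β * S := by
        have h1 : 0 ≤ α * s i := mul_nonneg hα.le (hs i)
        have h2 : β * (-((N:ℝ) * E)) ≤ β * S := mul_le_mul_of_nonneg_left (hsum i) hβ.le
        nlinarith
      show D * (α * s i + β * S) * (1 - C t i) - γ * w i * C t i < K * E
      rw [hCi]
      have h1 : 0 ≤ D * E * (β * (N:ℝ) * E + (α * s i + β * S)) :=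
        mul_nonneg (mul_nonneg hD.le hE.le) (by linarith)
      have h2 : 0 ≤ β * (N:ℝ) * D * E * (1 - E) := by
        exact mul_nonneg (mul_nonneg (mul_nonneg (mul_nonneg hβ.le (Nat.cast_nonneg N)) hD.le) hE.le) (by linarith)
      have h3 : 0 < E * (K - 2 * β * (N:ℝ) * D) := mul_pos hE (by linarith)
      have h4 : 0 < γ * w i * (1 + E) := by
        apply mul_pos (mul_pos hγ (hw i)); linarith
      nlinarith [h1, h2, h3, h4]
  intro t ht i
  constructor
  · have := eps_limit (u := -(C t i)) (c := 0) hK0 ht.2 fun ε hε hεT => by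
      have := (main ε hε hεT t ht i).1; linarith
    linarith
  · have := eps_limit (u := C t i) (c := 1) hK0 ht.2 fun ε hε hεT => by
      have := (main ε hε hεT t ht i).2; linarith
    linarith

lemma scs_comparison {N : ℕ} [Nonempty (Fin N)] (a : Fin N → Fin N → ℝ)
    (ha : ∀ i j, a i j = 0 ∨ a i j = 1)
    (w x y : Fin N → ℝ) (α β δ γ T : ℝ)
    (hα : 0 < α) (hβ : 0 < β) (hδ : 0 < δ) (hγ : 0 < γ)
    (hx : ∀ i, 0 ≤ x i) (hy : ∀ i, 0 ≤ y i) (hxy : ∀ i, x i ≤ y i)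
    (hw : ∀ i, 0 < w i) (hT : 0 < T)
    (Cx Cy : ℝ → Fin N → ℝ)
    (hCx : ∀ t ∈ Icc (0:ℝ) T, HasDerivAt Cx (scsF a w x α β δ γ (Cx t)) t)
    (hCy : ∀ t ∈ Icc (0:ℝ) T, HasDerivAt Cy (scsF a w y α β δ γ (Cy t)) t)
    (h0 : Cx 0 = Cy 0)
    (invx : ∀ t ∈ Icc (0:ℝ) T, ∀ i, Cx t i ∈ Icc (0:ℝ) 1)
    (invy : ∀ t ∈ Icc (0:ℝ) T, ∀ i, Cy t i ∈ Icc (0:ℝ) 1)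
    (K : ℝ) (hK1 : 1 ≤ K) (hKi : ∀ i, 2 * β * N / (δ * w i) < K) :
    ∀ t ∈ Icc (0:ℝ) T, ∀ i, Cx t i ≤ Cy t i := by
  have hK0 : (0:ℝ) < K := lt_of_lt_of_le one_pos hK1
  have main : ∀ ε, 0 < ε → ε * Real.exp (K * T) ≤ 1 → ∀ t ∈ Icc (0:ℝ) T, ∀ i,
      Cx t i - Cy t i ≤ ε * Real.exp (K * t) := by
    intro ε hε hεT
    have hB : ∀ t, HasDerivAt (fun t => ε * Real.exp (K * t))
        (K * (ε * Real.exp (K * t))) t := by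
      intro t
      have h1 : HasDerivAt (fun t : ℝ => K * t) K t := by
        simpa using (hasDerivAt_id t).const_mul K
      have := h1.exp.const_mul ε
      rw [show K * (ε * Real.exp (K * t)) = ε * (Real.exp (K * t) * K) by ring]; exact this
    refine sup_comparison (ι := Fin N) (a := (0:ℝ)) (b := T)
      (g := fun i t => Cx t i - Cy t i)
      (d := fun i t => scsF a w x α β δ γ (Cx t) i - scsF a w y α β δ γ (Cy t) i)
      (fun i t ht => ((hasDerivAt_pi.1 (hCx t ht) i).sub (hasDerivAt_pi.1 (hCy t ht) i)))
      (fun t => ε * Real.exp (K * t)) (fun t => K * (ε * Real.exp (K * t))) hB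
      (fun i => by
        show Cx 0 i - Cy 0 i ≤ ε * Real.exp (K * 0)
        rw [h0, mul_zero, Real.exp_zero, mul_one]; simp; linarith)
      ?_
    -- contact condition
    intro t ht hall' i hi'
    show scsF a w x α β δ γ (Cx t) i - scsF a w y α β δ γ (Cy t) i < K * (ε * Real.exp (K * t))
    simp only [scsF]
    have hall : ∀ j, Cx t j - Cy t j ≤ ε * Real.exp (K * t) := hall'
    have hi : Cx t i - Cy t i = ε * Real.exp (K * t) := hi'
    clear hall' hi'
    set E := ε * Real.exp (K * t) with hEdef
    have hE : 0 < E := by positivity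
    have htIcc : t ∈ Icc (0:ℝ) T := Ico_subset_Icc_self ht
    obtain ⟨hu0, hu1⟩ := invx t htIcc i
    obtain ⟨hv0, hv1⟩ := invy t htIcc i
    have hv : Cy t i = Cx t i - E := by linarith [hi]
    have hD : 0 < 1 / (δ * w i) := one_div_pos.2 (mul_pos hδ (hw i))
    set D := 1 / (δ * w i) with hDdef
    have hKD : 2 * β * (N:ℝ) * D < K := by
      rw [hDdef, ← div_eq_mul_one_div]; exact hKi i
    set Sx := ∑ j, a j i * Cx t j with hSxdef
    set Sy := ∑ j, a j i * Cy t j with hSydef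
    have hSdiff : Sx - Sy ≤ (N:ℝ) * E := by
      rw [hSxdef, hSydef, ← Finset.sum_sub_distrib]
      calc (∑ j, (a j i * Cx t j - a j i * Cy t j)) ≤ ∑ _j : Fin N, E := by
            refine Finset.sum_le_sum fun j _ => ?_
            rcases ha j i with h | h
            · rw [h]; simpa using hE.le
            · rw [h, one_mul, one_mul]; exact hall j
      _ = (N:ℝ) * E := by
            rw [Finset.sum_const, Finset.card_univ, Fintype.card_fin, nsmul_eq_mul]
    have hSy0 : 0 ≤ Sy := by
      refine Finset.sum_nonneg fun j _ => ?_
      rcases ha j i with h | h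
      · rw [h, zero_mul]
      · rw [h, one_mul]; exact (invy t htIcc j).1
    set Px := α * x i + β * Sx with hPxdef
    set Py := α * y i + β * Sy with hPydef
    have hPy0 : 0 ≤ Py := add_nonneg (mul_nonneg hα.le (hy i)) (mul_nonneg hβ.le hSy0)
    have hPdiff : Px - Py ≤ β * (N:ℝ) * E := by
      have h1 : α * x i - α * y i ≤ 0 := by nlinarith [hxy i]
      have h2 : β * Sx - β * Sy ≤ β * ((N:ℝ) * E) := by nlinarith [hSdiff]
      rw [hPxdef, hPydef]; nlinarith
    have hkey : (Px - Py) * (1 - Cx t i) ≤ β * (N:ℝ) * E := by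
      rcases le_or_gt (Px - Py) 0 with h | h
      · have : (Px - Py) * (1 - Cx t i) ≤ 0 := mul_nonpos_of_nonpos_of_nonneg h (by linarith)
        nlinarith [mul_pos (mul_pos hβ (by exact_mod_cast Fin.pos i : (0:ℝ) < N)) hE]
      · calc (Px - Py) * (1 - Cx t i) ≤ (Px - Py) * 1 :=
              mul_le_mul_of_nonneg_left (by linarith) h.le
        _ ≤ β * (N:ℝ) * E := by linarith
    rw [hv]
    have h1 : D * ((Px - Py) * (1 - Cx t i)) ≤ D * (β * (N:ℝ) * E) :=
      mul_le_mul_of_nonneg_left hkey hD.le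
    have h2 : 0 ≤ D * (Py * E) := mul_nonneg hD.le (mul_nonneg hPy0 hE.le)
    have h3 : 0 < E * (K - 2 * β * (N:ℝ) * D) := mul_pos hE (by linarith)
    have h4 : 0 < γ * w i * E := mul_pos (mul_pos hγ (hw i)) hE
    have h5 : 0 ≤ β * (N:ℝ) * D * E :=
      mul_nonneg (mul_nonneg (mul_nonneg hβ.le (Nat.cast_nonneg N)) hD.le) hE.le
    linarith [h1, h2, h3, h4, h5]
  intro t ht i
  have := eps_limit (u := Cx t i - Cy t i) (c := 0) hK0 ht.2 fun ε hε hεT => by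
    have := main ε hε hεT t ht i; linarith
  linarith

/-- Monotonicity of the expected loss in the attack strategy: if 0 ≤ x ≤ y
componentwise, then L(x) ≤ L(y) (solutions started from the same initial
condition in [0,1]^N). -/
theorem loss_monotone_in_strategy {N : ℕ} (a : Fin N → Fin N → ℝ)
    (ha : ∀ i j, a i j = 0 ∨ a i j = 1)
    (w x y : Fin N → ℝ) (α β δ γ T : ℝ)
    (hα : 0 < α) (hβ : 0 < β) (hδ : 0 < δ) (hγ : 0 < γ)
    (hx : ∀ i, 0 ≤ x i) (hxy : ∀ i, x i ≤ y i) (hw : ∀ i, 0 < w i) (hT : 0 < T)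
    (Cx Cy : ℝ → Fin N → ℝ)
    (hCx : ∀ t ∈ Set.Icc (0 : ℝ) T, HasDerivAt Cx (scsF a w x α β δ γ (Cx t)) t)
    (hCy : ∀ t ∈ Set.Icc (0 : ℝ) T, HasDerivAt Cy (scsF a w y α β δ γ (Cy t)) t)
    (h0 : Cx 0 = Cy 0) (h0box : ∀ i, Cx 0 i ∈ Set.Icc (0 : ℝ) 1) :
    (∫ t in (0:ℝ)..T, ∑ i, w i * Cx t i) ≤ ∫ t in (0:ℝ)..T, ∑ i, w i * Cy t i := by
  rcases Nat.eq_zero_or_pos N with hN | hN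
  · subst hN
    simp
  haveI : Nonempty (Fin N) := ⟨⟨0, hN⟩⟩
  set K : ℝ := 1 + ∑ i, 2 * β * N / (δ * w i) with hKdef
  have hterm : ∀ i : Fin N, 0 ≤ 2 * β * (N:ℝ) / (δ * w i) := fun i =>
    div_nonneg (by positivity) (mul_pos hδ (hw i)).le
  have hK1 : 1 ≤ K := by
    have h : (0:ℝ) ≤ ∑ i, 2 * β * N / (δ * w i) := Finset.sum_nonneg fun i _ => hterm i
    rw [hKdef]
    exact le_add_of_nonneg_right h
  have hKi : ∀ i, 2 * β * (N:ℝ) / (δ * w i) < K := by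
    intro i
    have h := Finset.single_le_sum (fun j _ => hterm j) (Finset.mem_univ i)
    rw [hKdef]
    calc 2 * β * (N:ℝ) / (δ * w i) ≤ ∑ j, 2 * β * (N:ℝ) / (δ * w j) := h
    _ < 1 + ∑ j, 2 * β * (N:ℝ) / (δ * w j) := by linarith
  have hy : ∀ i, 0 ≤ y i := fun i => (hx i).trans (hxy i)
  have invx := scs_box_invariant a ha w x α β δ γ T hα hβ hδ hγ hx hw hT Cx hCx h0box K hK1 hKi
  have invy := scs_box_invariant a ha w y α β δ γ T hα hβ hδ hγ hy hw hT Cy hCy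
    (fun i => h0 ▸ h0box i) K hK1 hKi
  have hle := scs_comparison a ha w x y α β δ γ T hα hβ hδ hγ hx hy hxy hw hT Cx Cy hCx hCy h0
    invx invy K hK1 hKi
  have hcontx : ContinuousOn (fun t => ∑ i, w i * Cx t i) (Icc (0:ℝ) T) := by
    intro t ht
    exact (ContinuousAt.continuousWithinAt (tendsto_finset_sum _ fun i _ =>
      ((hasDerivAt_pi.1 (hCx t ht) i).continuousAt.const_mul (w i))))
  have hconty : ContinuousOn (fun t => ∑ i, w i * Cy t i) (Icc (0:ℝ) T) := by
    intro t ht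
    exact (ContinuousAt.continuousWithinAt (tendsto_finset_sum _ fun i _ =>
      ((hasDerivAt_pi.1 (hCy t ht) i).continuousAt.const_mul (w i))))
  refine intervalIntegral.integral_mono_on hT.le ?_ ?_ ?_
  · exact (hcontx.mono (by rw [uIcc_of_le hT.le])).intervalIntegrable
  · exact (hconty.mono (by rw [uIcc_of_le hT.le])).intervalIntegrable
  · intro t ht
    exact Finset.sum_le_sum fun i _ => mul_le_mul_of_nonneg_left (hle t ht i) (hw i).le
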